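/- Let σ be a g×g complex symmetric matrix fixed by h = [[A,B],[C,D]] ∈ Sp(2g,ℤ) (i.e. (Aσ+B)(Cσ+D)⁻¹ = σ), and let 𝐅 be a g×g-matrix-valued function on symmetric matrices satisfying 𝐅(γ·M) = (CM+D) 𝐅(M) (CM+D)ᵀ for all γ ∈ Sp(2g,ℤ). Set N = Cσ + D. If no two eigenvalues λᵢ, λⱼ of N satisfy λᵢλⱼ = 1, then 𝐅(σ) = 0. -/

import Mathlib

open Matrix

/-- The standard symplectic form `J = [[0, I], [-I, 0]]` over ℤ. -/
def symplJ (g : ℕ) : Matrix (Fin g ⊕ Fin g) (Fin g ⊕ Fin g) ℤ :=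
  Matrix.fromBlocks 0 1 (-1) 0



open Matrix Polynomial Module Module.End

section Aux

variable {n : Type*} [Fintype n] [DecidableEq n]

lemma myCharpolyEval {R : Type*} [CommRing R] (M : Matrix n n R) (μ : R) :
    M.charpoly.eval μ = (Matrix.scalar n μ - M).det := by
  rw [Matrix.charpoly, _root_.eval_det, Matrix.matPolyEquiv_charmatrix]
  simp

lemma myCharpolyTranspose {R : Type*} [CommRing R] (M : Matrix n n R) :
    Mᵀ.charpoly = M.charpoly := by
  rw [Matrix.charpoly, Matrix.charpoly, ← Matrix.det_transpose (charmatrix M)]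
  congr 1
  refine Matrix.ext fun i j => ?_
  simp only [charmatrix, Matrix.sub_apply, Matrix.transpose_apply, Matrix.scalar_apply,
    Matrix.diagonal_apply, RingHom.mapMatrix_apply, Matrix.map_apply]
  rcases eq_or_ne i j with rfl | hij
  · rfl
  · rw [if_neg hij, if_neg (Ne.symm hij)]

lemma myMemRoots {K : Type*} [Field K] (M : Matrix n n K) {μ : K} {v : n → K}
    (hv : v ≠ 0) (h : M.mulVec v = μ • v) : μ ∈ M.charpoly.roots := by
  rw [Polynomial.mem_roots (M.charpoly_monic.ne_zero), Polynomial.IsRoot, myCharpolyEval,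
    ← Matrix.exists_mulVec_eq_zero_iff]
  refine ⟨v, hv, ?_⟩
  have hscalar : (Matrix.scalar n μ).mulVec v = μ • v := by
    ext i
    simp [Matrix.scalar, Matrix.mulVec_diagonal, Pi.algebraMap_apply]
  rw [Matrix.sub_mulVec, hscalar, h, sub_self]

lemma myKeyZero {g : ℕ} (N X : Matrix (Fin g) (Fin g) ℂ) (hN : IsUnit N)
    (h : X = N * X * Nᵀ)
    (heig : ∀ a ∈ N.charpoly.roots, ∀ b ∈ N.charpoly.roots, a * b ≠ 1) : X = 0 := by
  have hdet : IsUnit N.det := (Matrix.isUnit_iff_isUnit_det N).mp hN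
  set S : Module.End ℂ (Fin g → ℂ) := Matrix.toLin' Nᵀ with hS
  set T : Module.End ℂ (Fin g → ℂ) := Matrix.toLin' N⁻¹ with hT
  set φ : Module.End ℂ (Fin g → ℂ) := Matrix.toLin' X with hφ
  have h2 : N⁻¹ * X = X * Nᵀ := by
    conv_lhs => rw [h]
    rw [← Matrix.mul_assoc, ← Matrix.mul_assoc, Matrix.nonsing_inv_mul N hdet, Matrix.one_mul]
  have hsemi : φ * S = T * φ := by
    rw [hS, hT, hφ, Module.End.mul_eq_comp, Module.End.mul_eq_comp, ← Matrix.toLin'_mul,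
      ← Matrix.toLin'_mul, h2]
  have hsemi' : ∀ μ : ℂ, SemiconjBy φ (S - μ • 1) (T - μ • 1) := by
    intro μ
    show φ * (S - μ • 1) = (T - μ • 1) * φ
    rw [mul_sub, sub_mul, hsemi, mul_smul_comm, smul_mul_assoc, mul_one, one_mul]
  -- eigenvalues of S are roots of charpoly of N
  have hrootS : ∀ μ : ℂ, S.HasEigenvalue μ → μ ∈ N.charpoly.roots := by
    intro μ hμ
    obtain ⟨v, hv⟩ := hμ.exists_hasEigenvector
    have hmv : Nᵀ.mulVec v = μ • v := by
      simpa [hS, Matrix.toLin'_apply] using hv.apply_eq_smul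
    have := myMemRoots Nᵀ hv.2 hmv
    rwa [myCharpolyTranspose] at this
  -- μ a root of charpoly of N implies μ is not an eigenvalue of T
  have hnoT : ∀ μ : ℂ, μ ∈ N.charpoly.roots → ¬ T.HasEigenvalue μ := by
    intro μ hμroot hTe
    obtain ⟨w, hw⟩ := hTe.exists_hasEigenvector
    have h1 : N⁻¹.mulVec w = μ • w := by
      simpa [hT, Matrix.toLin'_apply] using hw.apply_eq_smul
    have h2' : w = μ • N.mulVec w := by
      have h3 := congrArg N.mulVec h1
      rw [Matrix.mulVec_mulVec, Matrix.mul_nonsing_inv N hdet, Matrix.one_mulVec,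
        Matrix.mulVec_smul] at h3
      exact h3
    have hμ0 : μ ≠ 0 := by
      rintro rfl
      rw [zero_smul] at h2'
      exact hw.2 h2'
    have h3 : N.mulVec w = μ⁻¹ • w := by
      conv_rhs => rw [h2']
      rw [smul_smul, inv_mul_cancel₀ hμ0, one_smul]
    exact heig μ hμroot μ⁻¹ (myMemRoots N hw.2 h3) (mul_inv_cancel₀ hμ0)
  -- φ vanishes on each maxGenEigenspace of S
  have hvanish : ∀ μ : ℂ, ∀ v ∈ S.maxGenEigenspace μ, φ v = 0 := by
    intro μ v hv
    by_cases hbot : S.maxGenEigenspace μ = ⊥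
    · rw [hbot, Submodule.mem_bot] at hv
      rw [hv, map_zero]
    · have hSe : S.HasEigenvalue μ := HasUnifEigenvalue.lt zero_lt_one hbot
      have hTbot : T.maxGenEigenspace μ = ⊥ := by
        by_contra hne
        exact hnoT μ (hrootS μ hSe) (HasUnifEigenvalue.lt zero_lt_one hne)
      have hmem : φ v ∈ T.maxGenEigenspace μ := by
        rw [Module.End.mem_maxGenEigenspace] at hv ⊢
        obtain ⟨k, hk⟩ := hv
        refine ⟨k, ?_⟩
        have hsc : φ * (S - μ • 1) ^ k = (T - μ • 1) ^ k * φ := (hsemi' μ).pow_right k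
        calc ((T - μ • 1) ^ k) (φ v) = ((T - μ • 1) ^ k * φ) v := by
              rw [Module.End.mul_apply]
          _ = (φ * (S - μ • 1) ^ k) v := by rw [hsc]
          _ = φ (((S - μ • 1) ^ k) v) := by rw [Module.End.mul_apply]
          _ = 0 := by rw [hk, map_zero]
      rw [hTbot, Submodule.mem_bot] at hmem
      exact hmem
  have htop : ⨆ μ : ℂ, S.maxGenEigenspace μ = ⊤ := Module.End.iSup_maxGenEigenspace_eq_top S
  have hker : ⊤ ≤ LinearMap.ker φ := by
    rw [← htop]
    exact iSup_le fun μ v hv => LinearMap.mem_ker.mpr (hvanish μ v hv)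
  have hφ0 : φ = 0 := LinearMap.ker_eq_top.mp (top_le_iff.mp hker)
  have : Matrix.toLin' X = Matrix.toLin' (0 : Matrix (Fin g) (Fin g) ℂ) := by
    rw [← hφ, hφ0, map_zero]
  exact Matrix.toLin'.injective this

end Aux


/-- If `𝐅` is a bipartite Siegel modular form, `σ` is fixed by `h = [[A,B],[C,D]] ∈ Sp(2g,ℤ)`,
and no two eigenvalues `λᵢ, λⱼ` of `N = Cσ+D` satisfy `λᵢλⱼ = 1`, then `𝐅(σ) = 0`. -/
theorem stmt10 (g : ℕ) (σ : Matrix (Fin g) (Fin g) ℂ) (hσ : σᵀ = σ)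
    (A B C D : Matrix (Fin g) (Fin g) ℤ)
    (hSp : Matrix.fromBlocks A B C D * symplJ g * (Matrix.fromBlocks A B C D)ᵀ = symplJ g)
    (hU : IsUnit (C.map (Int.cast : ℤ → ℂ) * σ + D.map (Int.cast : ℤ → ℂ)))
    (hfix : (A.map (Int.cast : ℤ → ℂ) * σ + B.map (Int.cast : ℤ → ℂ)) *
      (C.map (Int.cast : ℤ → ℂ) * σ + D.map (Int.cast : ℤ → ℂ))⁻¹ = σ)
    (F : Matrix (Fin g) (Fin g) ℂ → Matrix (Fin g) (Fin g) ℂ)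
    (hF : ∀ A' B' C' D' : Matrix (Fin g) (Fin g) ℤ,
      Matrix.fromBlocks A' B' C' D' * symplJ g * (Matrix.fromBlocks A' B' C' D')ᵀ = symplJ g →
      ∀ M : Matrix (Fin g) (Fin g) ℂ, Mᵀ = M →
      IsUnit (C'.map (Int.cast : ℤ → ℂ) * M + D'.map (Int.cast : ℤ → ℂ)) →
      F ((A'.map (Int.cast : ℤ → ℂ) * M + B'.map (Int.cast : ℤ → ℂ)) *
          (C'.map (Int.cast : ℤ → ℂ) * M + D'.map (Int.cast : ℤ → ℂ))⁻¹) =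
        (C'.map (Int.cast : ℤ → ℂ) * M + D'.map (Int.cast : ℤ → ℂ)) * F M *
          (C'.map (Int.cast : ℤ → ℂ) * M + D'.map (Int.cast : ℤ → ℂ))ᵀ)
    (heig : ∀ a ∈ (C.map (Int.cast : ℤ → ℂ) * σ + D.map (Int.cast : ℤ → ℂ)).charpoly.roots,
      ∀ b ∈ (C.map (Int.cast : ℤ → ℂ) * σ + D.map (Int.cast : ℤ → ℂ)).charpoly.roots,
        a * b ≠ 1) :
    F σ = 0 := by
  have hFeq := hF A B C D hSp σ hσ hU
  rw [hfix] at hFeq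
  exact myKeyZero _ _ hU hFeq heig
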